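/- Let A and B be the companion matrices of f_55(x) = x^6 - 2x^5 + x^4 + x^2 - 2x + 1 and g_55(x) = x^6 + 2x^5 - 2x^3 + 2x + 1 respectively, and set T = A⁻¹B. Then T - I has rank one and (T - I)² = 0; in particular T is a unipotent transvection. -/

import Mathlib

def A55 : Matrix (Fin 6) (Fin 6) ℚ :=
  !![0,0,0,0,0,-1; 1,0,0,0,0,2; 0,1,0,0,0,-1; 0,0,1,0,0,0; 0,0,0,1,0,-1; 0,0,0,0,1,2]

def B55 : Matrix (Fin 6) (Fin 6) ℚ :=
  !![0,0,0,0,0,-1; 1,0,0,0,0,-2; 0,1,0,0,0,0; 0,0,1,0,0,2; 0,0,0,1,0,0; 0,0,0,0,1,-2]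


noncomputable def T55 : Matrix (Fin 6) (Fin 6) ℚ := A55⁻¹ * B55


@[simp] lemma cons_val_five' {α : Type*} {m : ℕ} (x : α)
    (u : Fin m.succ.succ.succ.succ.succ → α) :
    Matrix.vecCons x u 5 =
      Matrix.vecHead (Matrix.vecTail (Matrix.vecTail (Matrix.vecTail (Matrix.vecTail u)))) := rfl

def Ainv55 : Matrix (Fin 6) (Fin 6) ℚ :=
  !![2,1,0,0,0,0; -1,0,1,0,0,0; 0,0,0,1,0,0; -1,0,0,0,1,0; 2,0,0,0,0,1; -1,0,0,0,0,0]

lemma Ainv55_mul : Ainv55 * A55 = 1 := by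
  ext i j
  fin_cases i <;> fin_cases j <;>
    simp [Ainv55, A55, Matrix.mul_apply, Fin.sum_univ_six, Matrix.one_apply]
  all_goals norm_num [Matrix.vecHead, Matrix.vecTail]

lemma A55_inv_eq : A55⁻¹ = Ainv55 := Matrix.inv_eq_left_inv Ainv55_mul

lemma T55_eq : T55 = !![1,0,0,0,0,-4; 0,1,0,0,0,1; 0,0,1,0,0,2; 0,0,0,1,0,1; 0,0,0,0,1,-4; 0,0,0,0,0,1] := by
  rw [T55, A55_inv_eq]
  ext i j
  fin_cases i <;> fin_cases j <;>
    simp [Ainv55, B55, Matrix.mul_apply, Fin.sum_univ_six]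
  all_goals norm_num [Matrix.vecHead, Matrix.vecTail]

def M55 : Matrix (Fin 6) (Fin 6) ℚ :=
  !![0,0,0,0,0,-4; 0,0,0,0,0,1; 0,0,0,0,0,2; 0,0,0,0,0,1; 0,0,0,0,0,-4; 0,0,0,0,0,0]

lemma M55_eq : T55 - 1 = M55 := by
  rw [T55_eq]
  ext i j
  fin_cases i <;> fin_cases j <;>
    simp [M55, Matrix.one_apply]
  all_goals norm_num [Matrix.vecHead, Matrix.vecTail]

lemma M55_factor :
    M55 = (!![-4; 1; 2; 1; -4; 0] : Matrix (Fin 6) (Fin 1) ℚ) *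
      (!![0,0,0,0,0,1] : Matrix (Fin 1) (Fin 6) ℚ) := by
  ext i j
  fin_cases i <;> fin_cases j <;>
    simp [M55, Matrix.mul_apply]
  all_goals norm_num [Matrix.vecHead, Matrix.vecTail]


theorem T55_transvection :
    (T55 - 1).rank = 1 ∧ (T55 - 1) ^ 2 = 0 := by
  rw [M55_eq]
  constructor
  · apply le_antisymm
    · calc M55.rank ≤ (!![0,0,0,0,0,1] : Matrix (Fin 1) (Fin 6) ℚ).rank := by
            rw [M55_factor]; exact Matrix.rank_mul_le_right _ _
        _ ≤ 1 := (Matrix.rank_le_card_height _).trans (le_of_eq Fintype.card_unique)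
    · rw [Nat.one_le_iff_ne_zero]
      intro h0
      have hrange : LinearMap.range M55.mulVecLin = ⊥ := by
        rw [← Submodule.finrank_eq_zero]
        exact h0
      have h1 : M55.mulVecLin (Pi.single 5 1) ∈ LinearMap.range M55.mulVecLin := ⟨_, rfl⟩
      rw [hrange, Submodule.mem_bot] at h1
      have h2 := congrFun h1 0
      simp [Matrix.mulVecLin_apply, Matrix.mulVec_single, M55] at h2
  · ext i j
    fin_cases i <;> fin_cases j <;>
      simp [M55, pow_two, Matrix.mul_apply, Fin.sum_univ_six]
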